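/- arXiv:2206.01501 — 2 statements merged into one kernel-verified Lean document; each statement's English description precedes it below -/
import Mathlib

section
/- For an injective map U on {0,1}^n × {0,1}^m with blank initial tape y₀ = 0^m and X uniform on {0,1}^n, and any k > 0, the probability that the number of leading zeros of the first output component exceeds f + k, while the number of used cells (position of last 1) of the second output component is at most f, is at most 2^(−k). -/
/-- Number of leading zeros of a string: the largest `j` such that all bits at
positions `< j` are `false`. -/
def leadingZeros {n : ℕ} (z : Fin n → Bool) : ℕ :=
  Nat.findGreatest (fun j => ∀ i : Fin n, (i : ℕ) < j → z i = false) n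

/-- Number of used cells: the largest index carrying a `1` (or `0` if none). -/
def usedCells {m : ℕ} (y : Fin m → Bool) : ℕ :=
  (Finset.univ.filter (fun i : Fin m => y i = true)).sup (fun i => (i : ℕ))

lemma leadingZeros_le {n : ℕ} (z : Fin n → Bool) : leadingZeros z ≤ n :=
  Nat.findGreatest_le n

lemma lz_false {n c : ℕ} (z : Fin n → Bool) (h : c < leadingZeros z) (i : Fin n)
    (hi : (i : ℕ) ≤ c) : z i = false := by
  have hspec : ∀ i : Fin n, (i : ℕ) < leadingZeros z → z i = false := by
    have hiff := (Nat.findGreatest_eq_iff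
      (P := fun j => ∀ i : Fin n, (i : ℕ) < j → z i = false)
      (m := leadingZeros z) (k := n)).1 rfl
    exact hiff.2.1 (by omega)
  exact hspec i (lt_of_le_of_lt hi h)

lemma uc_false {m f : ℕ} (y : Fin m → Bool) (h : usedCells y ≤ f) (i : Fin m)
    (hi : f < (i : ℕ)) : y i = false := by
  by_contra hcon
  have hy : y i = true := by simpa using hcon
  have : (i : ℕ) ≤ usedCells y :=
    Finset.le_sup (f := fun i : Fin m => (i : ℕ)) (by simp [hy])
  omega

theorem landauer_principle_finite (n m f k : ℕ) (hk : 0 < k)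
    (U : (Fin n → Bool) × (Fin m → Bool) → (Fin n → Bool) × (Fin m → Bool))
    (hU : Function.Injective U) :
    ((Finset.univ.filter (fun x : Fin n → Bool =>
        f + k < leadingZeros (U (x, fun _ => false)).1 ∧
        usedCells (U (x, fun _ => false)).2 ≤ f)).card : ℝ) / 2 ^ n
      ≤ (2 : ℝ) ^ (-(k : ℤ)) := by
  set S := (Finset.univ.filter (fun x : Fin n → Bool =>
        f + k < leadingZeros (U (x, fun _ => false)).1 ∧
        usedCells (U (x, fun _ => false)).2 ≤ f)) with hS
  by_cases hn : n ≤ f + k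
  · have hempty : S = ∅ := by
      apply Finset.eq_empty_of_forall_notMem
      intro x hx
      rw [hS, Finset.mem_filter] at hx
      have := leadingZeros_le (U (x, fun _ => false)).1
      omega
    rw [hempty]
    simp
  · push_neg at hn
    -- card bound
    have hcard : S.card ≤ 2 ^ (n - k) := by
      classical
      let T := ({i : Fin n // f + k < (i : ℕ)} → Bool) × ({i : Fin m // (i : ℕ) ≤ f} → Bool)
      let Φ : (Fin n → Bool) → T := fun x =>
        (fun i => (U (x, fun _ => false)).1 i.1, fun i => (U (x, fun _ => false)).2 i.1)
      have hinj : Set.InjOn Φ S := by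
        intro x₁ h₁ x₂ h₂ heq
        rw [hS, Finset.mem_coe, Finset.mem_filter] at h₁ h₂
        obtain ⟨-, hlz₁, huc₁⟩ := h₁
        obtain ⟨-, hlz₂, huc₂⟩ := h₂
        have hUeq : U (x₁, fun _ => false) = U (x₂, fun _ => false) := by
          apply Prod.ext
          · funext i
            by_cases hi : (i : ℕ) ≤ f + k
            · rw [lz_false _ hlz₁ i hi, lz_false _ hlz₂ i hi]
            · push_neg at hi
              exact congrFun (congrArg Prod.fst heq) ⟨i, hi⟩
          · funext i
            by_cases hi : (i : ℕ) ≤ f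
            · exact congrFun (congrArg Prod.snd heq) ⟨i, hi⟩
            · push_neg at hi
              rw [uc_false _ huc₁ i hi, uc_false _ huc₂ i hi]
        have := hU hUeq
        exact (Prod.mk.injEq _ _ _ _ ▸ this).1
      have h1 : S.card ≤ Fintype.card T :=
        calc S.card ≤ (Finset.univ : Finset T).card :=
              Finset.card_le_card_of_injOn Φ (fun _ _ => Finset.mem_univ _) hinj
          _ = Fintype.card T := Finset.card_univ
      have hA : Fintype.card {i : Fin n // f + k < (i : ℕ)} ≤ n - (f + k + 1) := by
        have : Function.Injective (fun i : {i : Fin n // f + k < (i : ℕ)} =>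
            (⟨(i : Fin n) - (f + k + 1) , by have := i.1.isLt; have := i.2; omega⟩ :
              Fin (n - (f + k + 1)))) := by
          intro a b hab
          have ha := a.2; have hb := b.2
          have := Fin.mk.injEq _ _ _ _ ▸ hab
          apply Subtype.ext; apply Fin.ext
          simp only [Fin.mk.injEq] at hab
          omega
        simpa using Fintype.card_le_of_injective _ this
      have hB : Fintype.card {i : Fin m // (i : ℕ) ≤ f} ≤ f + 1 := by
        have : Function.Injective (fun i : {i : Fin m // (i : ℕ) ≤ f} =>
            (⟨(i : Fin m), by have := i.2; omega⟩ : Fin (f + 1))) := by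
          intro a b hab
          simp only [Fin.mk.injEq] at hab
          exact Subtype.ext (Fin.ext hab)
        simpa using Fintype.card_le_of_injective _ this
      have hT : Fintype.card T ≤ 2 ^ (n - k) := by
        have : Fintype.card T =
            2 ^ Fintype.card {i : Fin n // f + k < (i : ℕ)} *
            2 ^ Fintype.card {i : Fin m // (i : ℕ) ≤ f} := by
          simp [T, Fintype.card_prod, Fintype.card_fun]
        rw [this]
        calc 2 ^ Fintype.card {i : Fin n // f + k < (i : ℕ)} *
              2 ^ Fintype.card {i : Fin m // (i : ℕ) ≤ f}
            ≤ 2 ^ (n - (f + k + 1)) * 2 ^ (f + 1) :=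
              Nat.mul_le_mul (Nat.pow_le_pow_right (by norm_num) hA)
                (Nat.pow_le_pow_right (by norm_num) hB)
          _ = 2 ^ (n - k) := by rw [← pow_add]; congr 1; omega
      exact h1.trans hT
    have hk_le : k ≤ n := by omega
    rw [div_le_iff₀ (by positivity)]
    calc (S.card : ℝ) ≤ ((2 ^ (n - k) : ℕ) : ℝ) := by exact_mod_cast hcard
      _ = (2 : ℝ) ^ (-(k : ℤ)) * 2 ^ n := by
          push_cast
          rw [← zpow_natCast (2 : ℝ) (n - k), ← zpow_natCast (2 : ℝ) n, ← zpow_add₀ (by norm_num)]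
          congr 1
          omega
end

section
/- Leftover hash lemma: Let H be a 2-universal family of hash functions from a finite type X to {0,1}^m, and let X be a random variable with min-entropy H_∞(X) ≥ m + 2ε. Let S be uniform on H, independent of X. Then the total variation distance between the joint distribution of (S(X), S) and the product of the uniform distribution on {0,1}^m with the distribution of S is at most 2^(−ε). -/
open Finset

private lemma fiber_sq {σ τ : Type*} [Fintype σ] [Fintype τ] [DecidableEq τ]
    (h : σ → τ) (p : σ → ℝ) :
    ∑ y : τ, (∑ x ∈ univ.filter (fun x => h x = y), p x) ^ 2
      = ∑ x₁ : σ, p x₁ * ∑ x₂ ∈ univ.filter (fun x₂ => h x₂ = h x₁), p x₂ := by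
  have key : ∀ y : τ, (∑ x ∈ univ.filter (fun x => h x = y), p x) ^ 2
      = ∑ x₁ ∈ univ.filter (fun x => h x = y),
          (p x₁ * ∑ x₂ ∈ univ.filter (fun x₂ => h x₂ = h x₁), p x₂) := by
    intro y
    rw [sq, Finset.sum_mul]
    refine Finset.sum_congr rfl fun x₁ hx₁ => ?_
    simp only [mem_filter] at hx₁
    rw [hx₁.2]
  rw [Finset.sum_congr rfl (fun y _ => key y)]
  exact Finset.sum_fiberwise _ _ _

/-- Leftover hash lemma. `p` is the distribution of the source `X` on `σ`,
`𝓗` a 2-universal family of hash functions `σ → {0,1}^m`, and `S` is uniform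
on `𝓗`.  The joint distribution of `(S(X), S)` is `ε`-close in total variation
to uniform-times-`S`. -/
theorem leftover_hash_lemma {σ : Type*} [Fintype σ] (m : ℕ) (ε : ℝ)
    (𝓗 : Finset (σ → (Fin m → Bool))) (h𝓗 : 𝓗.Nonempty)
    (huniv : ∀ x₁ x₂ : σ, x₁ ≠ x₂ →
        ((𝓗.filter (fun h => h x₁ = h x₂)).card : ℝ) / 𝓗.card ≤ (2 : ℝ) ^ (-(m : ℤ)))
    (p : σ → ℝ) (hp : ∀ x, 0 ≤ p x) (hp1 : ∑ x, p x = 1)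
    (hmin : ∀ x, p x ≤ (2 : ℝ) ^ (-((m : ℝ) + 2 * ε))) :
    ((1 : ℝ) / 2) * ∑ y : Fin m → Bool, ∑ h ∈ 𝓗,
        |((1 : ℝ) / 𝓗.card) * (∑ x ∈ univ.filter (fun x => h x = y), p x)
          - (2 : ℝ) ^ (-(m : ℤ)) * ((1 : ℝ) / 𝓗.card)|
      ≤ (2 : ℝ) ^ (-ε) := by
  classical
  set K : ℝ := (𝓗.card : ℝ) with hKdef
  have hK0 : 0 < K := by
    have h1 : 0 < 𝓗.card := Finset.card_pos.mpr h𝓗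
    rw [hKdef]
    exact_mod_cast h1
  set a : ℝ := (2 : ℝ) ^ (-(m : ℤ)) with hadef
  have ha0 : 0 < a := by positivity
  have haM : (2 : ℝ) ^ m * a = 1 := by
    rw [hadef, zpow_neg, zpow_natCast]
    field_simp
  set b : ℝ := (2 : ℝ) ^ (-((m : ℝ) + 2 * ε)) with hbdef
  have hb0 : 0 < b := Real.rpow_pos_of_pos two_pos _
  set P : (σ → Fin m → Bool) → (Fin m → Bool) → ℝ :=
      fun h y => ∑ x ∈ univ.filter (fun x => h x = y), p x with hPdef
  have hPsum : ∀ h, ∑ y, P h y = 1 := fun h =>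
    (Finset.sum_fiberwise univ h p).trans hp1
  -- sum of p squared
  have hpsq : ∑ x, p x ^ 2 ≤ b := by
    calc ∑ x, p x ^ 2 ≤ ∑ x, p x * b := by
          refine Finset.sum_le_sum fun x _ => ?_
          rw [sq]
          exact mul_le_mul_of_nonneg_left (hmin x) (hp x)
      _ = b := by rw [← Finset.sum_mul, hp1, one_mul]
  -- collision bound
  have hcol : ∀ x₁ x₂ : σ, ((𝓗.filter (fun h => h x₂ = h x₁)).card : ℝ)
      ≤ a * K + (if x₁ = x₂ then K else 0) := by
    intro x₁ x₂
    by_cases hx : x₁ = x₂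
    · subst hx
      have hcc : ((𝓗.filter (fun h => h x₁ = h x₁)).card : ℝ) = K := by
        rw [Finset.filter_true_of_mem fun _ _ => rfl, hKdef]
      rw [hcc, if_pos rfl]
      nlinarith [mul_pos ha0 hK0]
    · simp only [if_neg hx, add_zero]
      have := huniv x₂ x₁ (fun h' => hx h'.symm)
      rw [div_le_iff₀ hK0] at this
      exact this
  -- sum over h of sum over y of P^2
  have hS2 : ∑ h ∈ 𝓗, ∑ y, (P h y) ^ 2 ≤ a * K + K * b := by
    have step1 : ∑ h ∈ 𝓗, ∑ y, (P h y) ^ 2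
        = ∑ x₁, ∑ x₂, (p x₁ * p x₂) * ((𝓗.filter (fun h => h x₂ = h x₁)).card : ℝ) := by
      calc ∑ h ∈ 𝓗, ∑ y, (P h y) ^ 2
          = ∑ h ∈ 𝓗, ∑ x₁, p x₁ * ∑ x₂ ∈ univ.filter (fun x₂ => h x₂ = h x₁), p x₂ :=
            Finset.sum_congr rfl fun h _ => fiber_sq h p
        _ = ∑ h ∈ 𝓗, ∑ x₁, ∑ x₂, (if h x₂ = h x₁ then p x₁ * p x₂ else 0) := by
            refine Finset.sum_congr rfl fun h _ => Finset.sum_congr rfl fun x₁ _ => ?_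
            rw [Finset.sum_filter, Finset.mul_sum]
            exact Finset.sum_congr rfl fun x₂ _ => by split <;> simp
        _ = ∑ x₁, ∑ x₂, ∑ h ∈ 𝓗, (if h x₂ = h x₁ then p x₁ * p x₂ else 0) := by
            rw [Finset.sum_comm]
            exact Finset.sum_congr rfl fun x₁ _ => Finset.sum_comm
        _ = ∑ x₁, ∑ x₂, (p x₁ * p x₂) * ((𝓗.filter (fun h => h x₂ = h x₁)).card : ℝ) := by
            refine Finset.sum_congr rfl fun x₁ _ => Finset.sum_congr rfl fun x₂ _ => ?_
            rw [← Finset.sum_filter, Finset.sum_const, nsmul_eq_mul, mul_comm]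
    rw [step1]
    calc ∑ x₁, ∑ x₂, (p x₁ * p x₂) * ((𝓗.filter (fun h => h x₂ = h x₁)).card : ℝ)
        ≤ ∑ x₁, ∑ x₂, ((p x₁ * p x₂) * (a * K) + (if x₁ = x₂ then p x₁ * p x₂ * K else 0)) := by
          refine Finset.sum_le_sum fun x₁ _ => Finset.sum_le_sum fun x₂ _ => ?_
          have h1 := hcol x₁ x₂
          have hpp : 0 ≤ p x₁ * p x₂ := mul_nonneg (hp x₁) (hp x₂)
          by_cases hx : x₁ = x₂
          · simp only [if_pos hx] at h1 ⊢
            nlinarith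
          · simp only [if_neg hx] at h1 ⊢
            nlinarith
      _ = (∑ x₁, ∑ x₂, (p x₁ * p x₂)) * (a * K) + ∑ x₁, p x₁ * p x₁ * K := by
          simp only [Finset.sum_add_distrib]
          congr 1
          · simp_rw [← Finset.sum_mul]
          · refine Finset.sum_congr rfl fun x₁ _ => ?_
            rw [Finset.sum_ite_eq univ x₁ (fun x₂ => p x₁ * p x₂ * K), if_pos (mem_univ x₁)]
      _ ≤ 1 * (a * K) + b * K := by
          have e1 : ∑ x₁ : σ, ∑ x₂ : σ, p x₁ * p x₂ = 1 := by
            rw [← Finset.sum_mul_sum, hp1, one_mul]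
          rw [e1]
          have : ∑ x₁, p x₁ * p x₁ * K ≤ b * K := by
            rw [← Finset.sum_mul]
            refine mul_le_mul_of_nonneg_right ?_ hK0.le
            calc ∑ x₁, p x₁ * p x₁ = ∑ x₁, p x₁ ^ 2 := by
                  exact Finset.sum_congr rfl fun x _ => (sq (p x)).symm
              _ ≤ b := hpsq
          linarith
      _ = a * K + K * b := by ring
  -- sum of squares of deviations
  have hsq : ∑ y : Fin m → Bool, ∑ h ∈ 𝓗,
      ((1 / K) * P h y - a * (1 / K)) ^ 2 ≤ b / K := by
    have expand : ∀ y h, ((1 / K) * P h y - a * (1 / K)) ^ 2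
        = (1 / K ^ 2) * (P h y) ^ 2 - (2 * a / K ^ 2) * P h y + a ^ 2 / K ^ 2 := by
      intro y h
      field_simp
      ring
    have hcardy : ((Finset.univ : Finset (Fin m → Bool)).card : ℝ) = (2 : ℝ) ^ m := by
      simp [Finset.card_univ]
    calc ∑ y : Fin m → Bool, ∑ h ∈ 𝓗, ((1 / K) * P h y - a * (1 / K)) ^ 2
        = ∑ h ∈ 𝓗, ∑ y : Fin m → Bool, ((1 / K) * P h y - a * (1 / K)) ^ 2 :=
          Finset.sum_comm
      _ = (1 / K ^ 2) * (∑ h ∈ 𝓗, ∑ y, (P h y) ^ 2)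
            - (2 * a / K ^ 2) * K + (2 : ℝ) ^ m * K * (a ^ 2 / K ^ 2) := by
          have e : ∀ h ∈ 𝓗, ∑ y : Fin m → Bool, ((1 / K) * P h y - a * (1 / K)) ^ 2
              = (1 / K ^ 2) * (∑ y, (P h y) ^ 2) - (2 * a / K ^ 2)
                + (2 : ℝ) ^ m * (a ^ 2 / K ^ 2) := by
            intro h _
            simp_rw [expand]
            rw [Finset.sum_add_distrib, Finset.sum_sub_distrib, ← Finset.mul_sum,
              ← Finset.mul_sum, hPsum, mul_one, Finset.sum_const, nsmul_eq_mul, hcardy]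
          rw [Finset.sum_congr rfl e, Finset.sum_add_distrib, Finset.sum_sub_distrib,
            ← Finset.mul_sum, Finset.sum_const, Finset.sum_const, nsmul_eq_mul, nsmul_eq_mul,
            ← hKdef]
          ring
      _ ≤ (1 / K ^ 2) * (a * K + K * b) - (2 * a / K ^ 2) * K + (2 : ℝ) ^ m * K * (a ^ 2 / K ^ 2) := by
          have h2 := mul_le_mul_of_nonneg_left hS2 (by positivity : (0 : ℝ) ≤ 1 / K ^ 2)
          linarith
      _ = b / K := by
          have e3 : (2 : ℝ) ^ m * K * (a ^ 2 / K ^ 2) = (2 ^ m * a) * a / K := by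
            field_simp
          rw [e3, haM, one_mul]
          field_simp
          ring
  -- Cauchy-Schwarz
  have hCS : ∑ y : Fin m → Bool, ∑ h ∈ 𝓗,
      |(1 / K) * P h y - a * (1 / K)|
      ≤ Real.sqrt ((2 : ℝ) ^ m * K) *
        Real.sqrt (∑ y : Fin m → Bool, ∑ h ∈ 𝓗, ((1 / K) * P h y - a * (1 / K)) ^ 2) := by
    have := Real.sum_mul_le_sqrt_mul_sqrt ((univ : Finset (Fin m → Bool)) ×ˢ 𝓗)
      (fun _ => (1 : ℝ)) (fun z => |(1 / K) * P z.2 z.1 - a * (1 / K)|)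
    simp only [one_mul, one_pow, sq_abs, Finset.sum_const, nsmul_eq_mul, mul_one,
      Finset.card_product, Finset.sum_product] at this
    convert this using 3
    push_cast
    simp [Finset.card_univ]
    exact hKdef
  -- final combination
  have hfin : Real.sqrt ((2 : ℝ) ^ m * K) * Real.sqrt (b / K) = (2 : ℝ) ^ (-ε) := by
    rw [← Real.sqrt_mul (by positivity)]
    have e1 : (2 : ℝ) ^ m * K * (b / K) = (2 : ℝ) ^ (-(2 * ε)) := by
      have : (2 : ℝ) ^ m * K * (b / K) = (2 : ℝ) ^ m * b := by
        field_simp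
      rw [this, hbdef, ← Real.rpow_natCast 2 m, ← Real.rpow_add two_pos]
      congr 1
      ring
    rw [e1]
    have e2 : (2 : ℝ) ^ (-(2 * ε)) = ((2 : ℝ) ^ (-ε)) ^ 2 := by
      rw [← Real.rpow_natCast ((2:ℝ) ^ (-ε)) 2, ← Real.rpow_mul (by norm_num)]
      congr 1
      push_cast
      ring
    rw [e2, Real.sqrt_sq (Real.rpow_pos_of_pos two_pos _).le]
  have habs : ∑ y : Fin m → Bool, ∑ h ∈ 𝓗,
      |(1 / K) * P h y - a * (1 / K)| ≤ (2 : ℝ) ^ (-ε) := by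
    calc ∑ y : Fin m → Bool, ∑ h ∈ 𝓗, |(1 / K) * P h y - a * (1 / K)|
        ≤ Real.sqrt ((2 : ℝ) ^ m * K) *
          Real.sqrt (∑ y : Fin m → Bool, ∑ h ∈ 𝓗, ((1 / K) * P h y - a * (1 / K)) ^ 2) := hCS
      _ ≤ Real.sqrt ((2 : ℝ) ^ m * K) * Real.sqrt (b / K) := by
          exact mul_le_mul_of_nonneg_left (Real.sqrt_le_sqrt hsq) (Real.sqrt_nonneg _)
      _ = (2 : ℝ) ^ (-ε) := hfin
  have hεpos : (0 : ℝ) < (2 : ℝ) ^ (-ε) := Real.rpow_pos_of_pos two_pos _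
  calc ((1 : ℝ) / 2) * ∑ y : Fin m → Bool, ∑ h ∈ 𝓗,
        |((1 : ℝ) / 𝓗.card) * (∑ x ∈ univ.filter (fun x => h x = y), p x)
          - (2 : ℝ) ^ (-(m : ℤ)) * ((1 : ℝ) / 𝓗.card)|
      = ((1 : ℝ) / 2) * ∑ y : Fin m → Bool, ∑ h ∈ 𝓗,
          |(1 / K) * P h y - a * (1 / K)| := rfl
    _ ≤ ((1 : ℝ) / 2) * (2 : ℝ) ^ (-ε) := by
        exact mul_le_mul_of_nonneg_left habs (by norm_num)
    _ ≤ (2 : ℝ) ^ (-ε) := by linarith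
end
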